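/- If A is an n×n Hermitian matrix with A𝟙ₙ = 0 where 0 is a simple eigenvalue, then at time t₀ = (1/√n)·arccos(1/√(n+1)), the quantum walk on the cone Â started at the conical vertex has uniform mixing: the first column of the mixing matrix M(t₀) = exp(-iÂt₀) ∘ conj(exp(-iÂt₀)) equals (1/(n+1))·𝟙_{n+1}. -/

import Mathlib

open Matrix

/-- The cone `K₁ + X`: border a Hermitian matrix `A` with a new vertex joined
to all vertices with weight 1. -/
noncomputable def cone {n : ℕ} (A : Matrix (Fin n) (Fin n) ℂ) :
    Matrix (Fin (n + 1)) (Fin (n + 1)) ℂ :=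
  Matrix.of fun i j =>
    Fin.cases (Fin.cases 0 (fun _ => 1) j)
      (fun i' => Fin.cases 1 (fun j' => A i' j') j) i

namespace Stmt3Aux

variable {n : ℕ}

noncomputable def e0 : Fin (n + 1) → ℂ := fun i => Fin.cases 1 (fun _ => 0) i
noncomputable def u : Fin (n + 1) → ℂ := fun i => Fin.cases 0 (fun _ => 1) i

lemma cone_apply_zero (A : Matrix (Fin n) (Fin n) ℂ) (i : Fin (n + 1)) :
    cone A i 0 = u i := by
  induction i using Fin.cases with
  | zero => simp [cone, u]
  | succ i' => simp [cone, u]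

lemma mulVec_e0 (A : Matrix (Fin n) (Fin n) ℂ) :
    cone A *ᵥ (e0 : Fin (n + 1) → ℂ) = u := by
  funext i
  simp [mulVec, dotProduct, e0, Fin.sum_univ_succ, cone_apply_zero]

lemma mulVec_u (A : Matrix (Fin n) (Fin n) ℂ)
    (h1 : A *ᵥ (fun _ => (1 : ℂ)) = 0) :
    cone A *ᵥ (u : Fin (n + 1) → ℂ) = (n : ℂ) • e0 := by
  funext i
  induction i using Fin.cases with
  | zero => simp [mulVec, dotProduct, u, e0, cone, Fin.sum_univ_succ]
  | succ i' =>
    have h := congrFun h1 i'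
    simp [mulVec, dotProduct] at h
    simp [mulVec, dotProduct, u, e0, cone, Fin.sum_univ_succ, h]

/-- column 0 of powers -/
noncomputable def c (A : Matrix (Fin n) (Fin n) ℂ) (m : ℕ) : Fin (n + 1) → ℂ :=
  fun j => ((cone A) ^ m) j 0

lemma c_zero (A : Matrix (Fin n) (Fin n) ℂ) : c A 0 = (e0 : Fin (n + 1) → ℂ) := by
  funext j
  induction j using Fin.cases with
  | zero => simp [c, e0, one_apply]
  | succ j' => simp [c, e0, one_apply, (Fin.succ_ne_zero j')]

lemma c_succ (A : Matrix (Fin n) (Fin n) ℂ) (m : ℕ) :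
    c A (m + 1) = cone A *ᵥ c A m := by
  funext j
  simp [c, pow_succ', mul_apply, mulVec, dotProduct]

lemma c_even_odd (A : Matrix (Fin n) (Fin n) ℂ)
    (h1 : A *ᵥ (fun _ => (1 : ℂ)) = 0) (k : ℕ) :
    c A (2 * k) = ((n : ℂ) ^ k) • e0 ∧ c A (2 * k + 1) = ((n : ℂ) ^ k) • u := by
  induction k with
  | zero =>
    constructor
    · simpa using c_zero A
    · have : c A 1 = cone A *ᵥ c A 0 := c_succ A 0
      rw [this, c_zero, mulVec_e0]
      simp
  | succ k ih =>
    have he : c A (2 * (k + 1)) = ((n : ℂ) ^ (k + 1)) • e0 := by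
      have h2 : 2 * (k + 1) = (2 * k + 1) + 1 := by ring
      rw [h2, c_succ, ih.2, mulVec_smul, mulVec_u A h1, smul_smul, ← pow_succ]
    refine ⟨he, ?_⟩
    have h2 : 2 * (k + 1) + 1 = (2 * (k + 1)) + 1 := rfl
    rw [h2, c_succ, he, mulVec_smul, mulVec_e0]

/-- entry of exp as a sum -/
lemma hasSum_exp_entry {m : ℕ} (M : Matrix (Fin m) (Fin m) ℂ) (j l : Fin m) :
    HasSum (fun k : ℕ => (((Nat.factorial k) : ℂ)⁻¹ • M ^ k) j l)
      (NormedSpace.exp M j l) := by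
  letI : SeminormedRing (Matrix (Fin m) (Fin m) ℂ) := Matrix.linftyOpSemiNormedRing
  letI : NormedRing (Matrix (Fin m) (Fin m) ℂ) := Matrix.linftyOpNormedRing
  letI : NormedAlgebra ℂ (Matrix (Fin m) (Fin m) ℂ) := Matrix.linftyOpNormedAlgebra
  have hsum := NormedSpace.exp_series_hasSum_exp' (𝕂 := ℂ) M
  exact Pi.hasSum.mp (Pi.hasSum.mp hsum j) l

end Stmt3Aux

open Stmt3Aux

theorem stmt3 {n : ℕ} (A : Matrix (Fin n) (Fin n) ℂ)
    (hA : A.IsHermitian)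
    (h1 : A *ᵥ (fun _ => (1 : ℂ)) = 0)
    (hsimple : ∀ v : Fin n → ℂ, A *ᵥ v = 0 → ∃ c : ℂ, v = fun _ => c) :
    ∀ j : Fin (n + 1),
      (NormedSpace.exp
          ((-(Complex.I * (((1 / Real.sqrt n) * Real.arccos (1 / Real.sqrt (n + 1)) : ℝ) : ℂ))) •
            cone A) j 0) *
        (starRingEnd ℂ) (NormedSpace.exp
          ((-(Complex.I * (((1 / Real.sqrt n) * Real.arccos (1 / Real.sqrt (n + 1)) : ℝ) : ℂ))) •
            cone A) j 0)
      = (1 / (n + 1) : ℝ) := by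
  intro j
  rcases Nat.eq_zero_or_pos n with rfl | hn
  · -- n = 0
    have hM : (-(Complex.I *
        (((1 / Real.sqrt (0 : ℕ)) * Real.arccos (1 / Real.sqrt ((0 : ℕ) + 1)) : ℝ) : ℂ))) •
          cone A = 0 := by
      have : Real.arccos (1 / Real.sqrt (((0 : ℕ) : ℝ) + 1)) = 0 := by
        norm_num [Real.arccos_one]
      rw [this]
      simp
    rw [hM, NormedSpace.exp_zero]
    fin_cases j
    simp [Matrix.one_apply]
  · -- n ≥ 1
    set x : ℝ := Real.arccos (1 / Real.sqrt (n + 1)) with hx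
    set t : ℝ := 1 / Real.sqrt n * x with ht
    set z : ℂ := -(Complex.I * (t : ℂ)) with hz
    set M : Matrix (Fin (n + 1)) (Fin (n + 1)) ℂ := z • cone A with hM
    have hsn : (0 : ℝ) < Real.sqrt n := Real.sqrt_pos.mpr (by positivity)
    have hsnC : ((Real.sqrt n : ℝ) : ℂ) ≠ 0 := by
      exact_mod_cast hsn.ne'
    have hzx : z = -Complex.I / ((Real.sqrt n : ℝ) : ℂ) * (x : ℂ) := by
      rw [hz, ht]
      push_cast
      ring
    have hs2 : ((Real.sqrt n : ℝ) : ℂ) ^ 2 = (n : ℂ) := by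
      rw [← Complex.ofReal_pow, Real.sq_sqrt (by positivity : (0:ℝ) ≤ (n:ℝ))]
      norm_cast
    have hz2 : z ^ 2 * (n : ℂ) = -((x : ℂ) ^ 2) := by
      rw [hzx, ← hs2]
      field_simp
      rw [Complex.I_sq]
      ring
    have hkey : ∀ k : ℕ, z ^ (2 * k) * (n : ℂ) ^ k = (-1) ^ k * (x : ℂ) ^ (2 * k) := by
      intro k
      rw [pow_mul, ← mul_pow, hz2, neg_pow, ← pow_mul, mul_comm]
    -- the series
    set f : ℕ → ℂ := fun k =>
      ((Nat.factorial k : ℂ))⁻¹ * (z ^ k * ((cone A) ^ k) j 0) with hf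
    have hterm : (fun k : ℕ => (((Nat.factorial k) : ℂ)⁻¹ • M ^ k) j 0) = f := by
      funext k
      rw [hf, hM, smul_pow]
      simp [Matrix.smul_apply, smul_eq_mul]
    have hexp : HasSum f (NormedSpace.exp M j 0) := by
      rw [← hterm]; exact hasSum_exp_entry M j 0
    have hce : ∀ k : ℕ, ((cone A) ^ (2 * k)) j 0 = (n : ℂ) ^ k * e0 j := by
      intro k
      have := congrFun (c_even_odd A h1 k).1 j
      simpa [c, Pi.smul_apply, smul_eq_mul] using this
    have hco : ∀ k : ℕ, ((cone A) ^ (2 * k + 1)) j 0 = (n : ℂ) ^ k * u j := by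
      intro k
      have := congrFun (c_even_odd A h1 k).2 j
      simpa [c, Pi.smul_apply, smul_eq_mul] using this
    have heven : HasSum (fun k => f (2 * k)) (e0 j * Complex.cos (x : ℂ)) := by
      have h := (Complex.hasSum_cos (x : ℂ)).mul_left (e0 j)
      convert h using 2 with k
      case e'_3 => rfl
      rw [hf]
      simp only [hce k]
      rw [show z ^ (2 * k) * ((n : ℂ) ^ k * e0 j)
          = (z ^ (2 * k) * (n : ℂ) ^ k) * e0 j by ring, hkey k]
      field_simp
    have hodd : HasSum (fun k => f (2 * k + 1))
        (u j * (-Complex.I / ((Real.sqrt n : ℝ) : ℂ)) * Complex.sin (x : ℂ)) := by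
      have h := (Complex.hasSum_sin (x : ℂ)).mul_left
        (u j * (-Complex.I / ((Real.sqrt n : ℝ) : ℂ)))
      convert h using 2 with k
      case e'_3 => rfl
      rw [hf]
      simp only [hco k]
      have hzz : z ^ (2 * k + 1) * (n : ℂ) ^ k
          = (-Complex.I / ((Real.sqrt n : ℝ) : ℂ)) * ((-1) ^ k * (x : ℂ) ^ (2 * k + 1)) := by
        rw [pow_succ, mul_comm (z ^ (2*k)) z, mul_assoc, hkey k, hzx, pow_succ]
        ring
      rw [show z ^ (2 * k + 1) * ((n : ℂ) ^ k * u j)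
          = (z ^ (2 * k + 1) * (n : ℂ) ^ k) * u j by ring, hzz]
      field_simp
    have htot : HasSum f (e0 j * Complex.cos (x : ℂ)
        + u j * (-Complex.I / ((Real.sqrt n : ℝ) : ℂ)) * Complex.sin (x : ℂ)) :=
      heven.even_add_odd hodd
    have hval : NormedSpace.exp M j 0 = e0 j * Complex.cos (x : ℂ)
        + u j * (-Complex.I / ((Real.sqrt n : ℝ) : ℂ)) * Complex.sin (x : ℂ) :=
      hexp.unique htot
    rw [hval]
    -- numeric evaluation
    have hy1 : (1 : ℝ) / Real.sqrt (n + 1) ≤ 1 := by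
      rw [div_le_one (by positivity)]
      have h0n : (0:ℝ) ≤ (n : ℝ) := Nat.cast_nonneg n
      have : (1 : ℝ) ≤ (n : ℝ) + 1 := by linarith
      calc (1:ℝ) = Real.sqrt 1 := Real.sqrt_one.symm
        _ ≤ Real.sqrt ((n:ℝ) + 1) := Real.sqrt_le_sqrt this
    have hy0 : (-1 : ℝ) ≤ 1 / Real.sqrt (n + 1) :=
      le_trans (by norm_num : (-1:ℝ) ≤ 0) (by positivity)
    have hcosx : Real.cos x = 1 / Real.sqrt (n + 1) := Real.cos_arccos hy0 hy1
    have hy2 : (1 / Real.sqrt ((n : ℝ) + 1)) ^ 2 = 1 / ((n : ℝ) + 1) := by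
      rw [div_pow, one_pow, Real.sq_sqrt (by positivity)]
    have hsinx : Real.sin x = Real.sqrt ((n : ℝ) / ((n : ℝ) + 1)) := by
      rw [hx, Real.sin_arccos, div_pow, one_pow, Real.sq_sqrt (by positivity)]
      congr 1
      field_simp
      ring
    induction j using Fin.cases with
    | zero =>
      simp only [e0, u, Fin.cases_zero, one_mul, zero_mul, add_zero]
      rw [← Complex.ofReal_cos, Complex.mul_conj]
      rw [hcosx]
      norm_cast
      rw [Complex.normSq_ofReal]
      rw [div_mul_div_comm, one_mul, Real.mul_self_sqrt (by positivity)]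
    | succ i' =>
      simp only [e0, u, Fin.cases_succ, one_mul, zero_mul, zero_add]
      rw [← Complex.ofReal_sin, Complex.mul_conj]
      have hnormsq : Complex.normSq (-Complex.I / ((Real.sqrt n : ℝ) : ℂ)
          * ((Real.sin x : ℝ) : ℂ)) = (Real.sin x / Real.sqrt n) ^ 2 := by
        rw [Complex.normSq_mul, Complex.normSq_div, Complex.normSq_neg, Complex.normSq_I,
          Complex.normSq_ofReal, Complex.normSq_ofReal]
        rw [div_pow]
        ring
      rw [hnormsq]
      norm_cast
      rw [hsinx, div_pow, Real.sq_sqrt (by positivity),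
        Real.sq_sqrt (by positivity : (0:ℝ) ≤ (n:ℝ))]
      have hn0 : (n : ℝ) ≠ 0 := by positivity
      have hn1 : (n : ℝ) + 1 ≠ 0 := by positivity
      field_simp
      ring
      push_cast
      ring
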